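/- Let A be the 4×6 binary matrix whose rows are (1,1,0,0,0,1), (1,0,0,1,1,0), (0,1,1,0,0,1), (0,0,1,1,1,0) (measurement nodes c₁,…,c₄ and variable nodes v₁,…,v₆). Then: (a) T = {v₄} is a termatiko set of A; (b) for the signal x = (0,0,1,1,0,0) with y = Ax = (0,1,1,2), the IPA run on (y, A) satisfies μ^{(ℓ)}_{v₄} = 0 for every ℓ ≥ 0, while μ^{(ℓ)}_{v₃} = 1 = x_{v₃} for every ℓ ≥ 1. Hence the IPA recovers only v₃ and fails to fully recover x, even though {v₁,v₂,v₃,v₄} is a minimal stopping set containing at most |{v₁,v₂,v₃,v₄}| − 2 nonzero positions of x and the zero-valued measurement node c₁ is connected to it (a counter-example to [RDVD12, Thm. 2]). -/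

import Mathlib

open scoped Classical
open Finset

variable {C V : Type*} [Fintype C] [Fintype V]

/-- The IPA lower/upper bounds `(μ^{(ℓ)}, M^{(ℓ)})` computed from measurement
matrix `A` and measurement vector `y`. -/
noncomputable def ipa (A : C → V → ℝ) (y : C → ℝ) : ℕ → (V → ℝ) × (V → ℝ)
  | 0 => (fun _ => 0,
      fun v => sInf {r : ℝ | ∃ c, A c v ≠ 0 ∧ r = y c / A c v})
  | ℓ + 1 =>
      (fun v => sSup {r : ℝ | ∃ c, A c v ≠ 0 ∧
          r = max 0 ((y c - ∑ v' ∈ Finset.univ.filter (fun v' => v' ≠ v),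
              A c v' * (ipa A y ℓ).2 v') / A c v)},
       fun v => sInf {r : ℝ | ∃ c, A c v ≠ 0 ∧
          r = (y c - ∑ v' ∈ Finset.univ.filter (fun v' => v' ≠ v),
              A c v' * (ipa A y ℓ).1 v') / A c v})

/-- IPA lower bound `μ^{(ℓ)}_v`. -/
noncomputable def ipaMu (A : C → V → ℝ) (y : C → ℝ) (ℓ : ℕ) (v : V) : ℝ := (ipa A y ℓ).1 v

/-- IPA upper bound `M^{(ℓ)}_v`. -/
noncomputable def ipaM (A : C → V → ℝ) (y : C → ℝ) (ℓ : ℕ) (v : V) : ℝ := (ipa A y ℓ).2 v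

/-- Neighbourhood `N(v)` of a variable node. -/
noncomputable def Nv (A : C → V → ℝ) (v : V) : Finset C := Finset.univ.filter fun c => A c v ≠ 0

/-- Neighbourhood `N(c)` of a measurement node. -/
noncomputable def Nc (A : C → V → ℝ) (c : C) : Finset V := Finset.univ.filter fun v => A c v ≠ 0

/-- Neighbourhood `N(T)` of a set of variable nodes. -/
noncomputable def NT (A : C → V → ℝ) (T : Finset V) : Finset C :=
  Finset.univ.filter fun c => ∃ v ∈ T, A c v ≠ 0

/-- `N_T(c) = N(c) ∩ T`. -/
noncomputable def NTc (A : C → V → ℝ) (T : Finset V) (c : C) : Finset V :=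
  T.filter fun v => A c v ≠ 0

/-- A stopping set: every neighbouring measurement node is connected at least twice to `T`. -/
def StoppingSet (A : C → V → ℝ) (T : Finset V) : Prop :=
  ∀ c ∈ NT A T, 2 ≤ (NTc A T c).card

/-- The set `S` of variable nodes outside `T` connected only to `N(T)`. -/
noncomputable def Sset (A : C → V → ℝ) (T : Finset V) : Finset V :=
  Finset.univ.filter fun v => v ∉ T ∧ ∀ c, A c v ≠ 0 → c ∈ NT A T

/-- The termatiko condition on a set `T` of variable nodes. -/
def TermatikoCond (A : C → V → ℝ) (T : Finset V) : Prop :=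
  ∀ c ∈ NT A T,
    (∃ v ∈ Sset A T, A c v ≠ 0) ∨
    2 ≤ ((NTc A T c).filter fun v => ∀ c', A c' v ≠ 0 → 2 ≤ (NTc A T c').card).card

/-- Real-valued indicator vector `1_T` of a set of variable nodes. -/
noncomputable def indVec (T : Finset V) : V → ℝ := fun v => if v ∈ T then 1 else 0

/-- The measurement vector `A · 1_T`. -/
noncomputable def measT (A : C → V → ℝ) (T : Finset V) : C → ℝ :=
  fun c => ∑ v, A c v * indVec T v

/-- `T` is a termatiko set of `A`: the IPA run on `A · 1_T` keeps all lower bounds at zero. -/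
def IsTermatiko (A : C → V → ℝ) (T : Finset V) : Prop :=
  ∀ (ℓ : ℕ) (v : V), ipaMu A (measT A T) ℓ v = 0

/-- `A` is a binary (0/1) matrix. -/
def Binary (A : C → V → ℝ) : Prop := ∀ c v, A c v = 0 ∨ A c v = 1

/-- `A` has no all-zero column. -/
def NoZeroCol (A : C → V → ℝ) : Prop := ∀ v, ∃ c, A c v ≠ 0

/-- `A` has nonnegative entries. -/
def MatNonneg (A : C → V → ℝ) : Prop := ∀ c v, 0 ≤ A c v

/-- The 4×6 binary measurement matrix of the counter-example. -/
noncomputable def A14 : Fin 4 → Fin 6 → ℝ :=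
  ![![1, 1, 0, 0, 0, 1],
    ![1, 0, 0, 1, 1, 0],
    ![0, 1, 1, 0, 0, 1],
    ![0, 0, 1, 1, 1, 0]]

/-- The signal `x = (0,0,1,1,0,0)`. -/
noncomputable def x14 : Fin 6 → ℝ := ![0, 0, 1, 1, 0, 0]

/-- The measurement vector `y = A·x`. -/
noncomputable def y14 : Fin 4 → ℝ := fun c => ∑ v, A14 c v * x14 v


lemma pairSet (P : Fin 4 → Prop) (c₁ c₂ : Fin 4) (h : ∀ c, P c ↔ c = c₁ ∨ c = c₂)
    (f : Fin 4 → ℝ) :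
    {r : ℝ | ∃ c, P c ∧ r = f c} = {f c₁, f c₂} := by
  ext r
  constructor
  · rintro ⟨c, hc, rfl⟩
    rcases (h c).1 hc with rfl | rfl
    · exact Or.inl rfl
    · exact Or.inr rfl
  · rintro (rfl | rfl)
    exacts [⟨c₁, (h c₁).2 (Or.inl rfl), rfl⟩, ⟨c₂, (h c₂).2 (Or.inr rfl), rfl⟩]

@[simp] lemma A14e_0_0 : A14 (0:Fin 4) (0:Fin 6) = 1 := rfl
@[simp] lemma A14e_0_1 : A14 (0:Fin 4) (1:Fin 6) = 1 := rfl
@[simp] lemma A14e_0_2 : A14 (0:Fin 4) (2:Fin 6) = 0 := rfl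
@[simp] lemma A14e_0_3 : A14 (0:Fin 4) (3:Fin 6) = 0 := rfl
@[simp] lemma A14e_0_4 : A14 (0:Fin 4) (4:Fin 6) = 0 := rfl
@[simp] lemma A14e_0_5 : A14 (0:Fin 4) (5:Fin 6) = 1 := rfl
@[simp] lemma A14e_1_0 : A14 (1:Fin 4) (0:Fin 6) = 1 := rfl
@[simp] lemma A14e_1_1 : A14 (1:Fin 4) (1:Fin 6) = 0 := rfl
@[simp] lemma A14e_1_2 : A14 (1:Fin 4) (2:Fin 6) = 0 := rfl
@[simp] lemma A14e_1_3 : A14 (1:Fin 4) (3:Fin 6) = 1 := rfl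
@[simp] lemma A14e_1_4 : A14 (1:Fin 4) (4:Fin 6) = 1 := rfl
@[simp] lemma A14e_1_5 : A14 (1:Fin 4) (5:Fin 6) = 0 := rfl
@[simp] lemma A14e_2_0 : A14 (2:Fin 4) (0:Fin 6) = 0 := rfl
@[simp] lemma A14e_2_1 : A14 (2:Fin 4) (1:Fin 6) = 1 := rfl
@[simp] lemma A14e_2_2 : A14 (2:Fin 4) (2:Fin 6) = 1 := rfl
@[simp] lemma A14e_2_3 : A14 (2:Fin 4) (3:Fin 6) = 0 := rfl
@[simp] lemma A14e_2_4 : A14 (2:Fin 4) (4:Fin 6) = 0 := rfl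
@[simp] lemma A14e_2_5 : A14 (2:Fin 4) (5:Fin 6) = 1 := rfl
@[simp] lemma A14e_3_0 : A14 (3:Fin 4) (0:Fin 6) = 0 := rfl
@[simp] lemma A14e_3_1 : A14 (3:Fin 4) (1:Fin 6) = 0 := rfl
@[simp] lemma A14e_3_2 : A14 (3:Fin 4) (2:Fin 6) = 1 := rfl
@[simp] lemma A14e_3_3 : A14 (3:Fin 4) (3:Fin 6) = 1 := rfl
@[simp] lemma A14e_3_4 : A14 (3:Fin 4) (4:Fin 6) = 1 := rfl
@[simp] lemma A14e_3_5 : A14 (3:Fin 4) (5:Fin 6) = 0 := rfl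

noncomputable def yv : Fin 4 → ℝ := ![0, 1, 1, 2]
@[simp] lemma yv_0 : yv 0 = 0 := rfl
@[simp] lemma yv_1 : yv 1 = 1 := rfl
@[simp] lemma yv_2 : yv 2 = 1 := rfl
@[simp] lemma yv_3 : yv 3 = 2 := rfl
noncomputable def yTv : Fin 4 → ℝ := ![0, 1, 0, 1]
@[simp] lemma yTv_0 : yTv 0 = 0 := rfl
@[simp] lemma yTv_1 : yTv 1 = 1 := rfl
@[simp] lemma yTv_2 : yTv 2 = 0 := rfl
@[simp] lemma yTv_3 : yTv 3 = 1 := rfl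
noncomputable def M0v : Fin 6 → ℝ := ![0, 0, 1, 1, 1, 0]
@[simp] lemma M0v_0 : M0v 0 = 0 := rfl
@[simp] lemma M0v_1 : M0v 1 = 0 := rfl
@[simp] lemma M0v_2 : M0v 2 = 1 := rfl
@[simp] lemma M0v_3 : M0v 3 = 1 := rfl
@[simp] lemma M0v_4 : M0v 4 = 1 := rfl
@[simp] lemma M0v_5 : M0v 5 = 0 := rfl
noncomputable def mu1v : Fin 6 → ℝ := ![0, 0, 1, 0, 0, 0]
@[simp] lemma mu1v_0 : mu1v 0 = 0 := rfl
@[simp] lemma mu1v_1 : mu1v 1 = 0 := rfl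
@[simp] lemma mu1v_2 : mu1v 2 = 1 := rfl
@[simp] lemma mu1v_3 : mu1v 3 = 0 := rfl
@[simp] lemma mu1v_4 : mu1v 4 = 0 := rfl
@[simp] lemma mu1v_5 : mu1v 5 = 0 := rfl
noncomputable def MTv : Fin 6 → ℝ := ![0, 0, 0, 1, 1, 0]
@[simp] lemma MTv_0 : MTv 0 = 0 := rfl
@[simp] lemma MTv_1 : MTv 1 = 0 := rfl
@[simp] lemma MTv_2 : MTv 2 = 0 := rfl
@[simp] lemma MTv_3 : MTv 3 = 1 := rfl
@[simp] lemma MTv_4 : MTv 4 = 1 := rfl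
@[simp] lemma MTv_5 : MTv 5 = 0 := rfl

@[simp] lemma x14e_0 : x14 (0:Fin 6) = 0 := rfl
@[simp] lemma x14e_1 : x14 (1:Fin 6) = 0 := rfl
@[simp] lemma x14e_2 : x14 (2:Fin 6) = 1 := rfl
@[simp] lemma x14e_3 : x14 (3:Fin 6) = 1 := rfl
@[simp] lemma x14e_4 : x14 (4:Fin 6) = 0 := rfl
@[simp] lemma x14e_5 : x14 (5:Fin 6) = 0 := rfl

lemma nb0 : ∀ c : Fin 4, (A14 c (0:Fin 6) ≠ 0) ↔ c = 0 ∨ c = 1 := by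
  intro c; fin_cases c <;> simp (config := { decide := true })
lemma nb1 : ∀ c : Fin 4, (A14 c (1:Fin 6) ≠ 0) ↔ c = 0 ∨ c = 2 := by
  intro c; fin_cases c <;> simp (config := { decide := true })
lemma nb2 : ∀ c : Fin 4, (A14 c (2:Fin 6) ≠ 0) ↔ c = 2 ∨ c = 3 := by
  intro c; fin_cases c <;> simp (config := { decide := true })
lemma nb3 : ∀ c : Fin 4, (A14 c (3:Fin 6) ≠ 0) ↔ c = 1 ∨ c = 3 := by
  intro c; fin_cases c <;> simp (config := { decide := true })
lemma nb4 : ∀ c : Fin 4, (A14 c (4:Fin 6) ≠ 0) ↔ c = 1 ∨ c = 3 := by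
  intro c; fin_cases c <;> simp (config := { decide := true })
lemma nb5 : ∀ c : Fin 4, (A14 c (5:Fin 6) ≠ 0) ↔ c = 0 ∨ c = 2 := by
  intro c; fin_cases c <;> simp (config := { decide := true })

lemma hy14 : y14 = yv := by
  funext c
  fin_cases c <;>
    simp (config := { decide := true }) [y14, Fin.sum_univ_six] <;> norm_num

lemma hyT : measT A14 ({3} : Finset (Fin 6)) = yTv := by
  funext c
  fin_cases c <;>
    simp (config := { decide := true }) [measT, indVec, Fin.sum_univ_six] <;> norm_num

lemma ipa0_y : ipa A14 yv 0 = (fun _ => 0, M0v) := by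
  simp only [ipa]
  rw [Prod.mk.injEq]
  refine ⟨rfl, ?_⟩
  have e0 : sInf {r : ℝ | ∃ c : Fin 4, A14 c (0:Fin 6) ≠ 0 ∧ r = yv c / A14 c (0:Fin 6)} = (0:ℝ) := by
    rw [pairSet _ 0 1 nb0, csInf_pair]
    norm_num [max_def, min_def]
  have e1 : sInf {r : ℝ | ∃ c : Fin 4, A14 c (1:Fin 6) ≠ 0 ∧ r = yv c / A14 c (1:Fin 6)} = (0:ℝ) := by
    rw [pairSet _ 0 2 nb1, csInf_pair]
    norm_num [max_def, min_def]
  have e2 : sInf {r : ℝ | ∃ c : Fin 4, A14 c (2:Fin 6) ≠ 0 ∧ r = yv c / A14 c (2:Fin 6)} = (1:ℝ) := by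
    rw [pairSet _ 2 3 nb2, csInf_pair]
    norm_num [max_def, min_def]
  have e3 : sInf {r : ℝ | ∃ c : Fin 4, A14 c (3:Fin 6) ≠ 0 ∧ r = yv c / A14 c (3:Fin 6)} = (1:ℝ) := by
    rw [pairSet _ 1 3 nb3, csInf_pair]
    norm_num [max_def, min_def]
  have e4 : sInf {r : ℝ | ∃ c : Fin 4, A14 c (4:Fin 6) ≠ 0 ∧ r = yv c / A14 c (4:Fin 6)} = (1:ℝ) := by
    rw [pairSet _ 1 3 nb4, csInf_pair]
    norm_num [max_def, min_def]
  have e5 : sInf {r : ℝ | ∃ c : Fin 4, A14 c (5:Fin 6) ≠ 0 ∧ r = yv c / A14 c (5:Fin 6)} = (0:ℝ) := by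
    rw [pairSet _ 0 2 nb5, csInf_pair]
    norm_num [max_def, min_def]
  funext v
  fin_cases v
  · exact e0
  · exact e1
  · exact e2
  · exact e3
  · exact e4
  · exact e5

lemma ipa_step_y (m : Fin 6 → ℝ) (ℓ : ℕ)
    (hm : m = (fun _ => (0:ℝ)) ∨ m = mu1v)
    (h1 : (ipa A14 yv ℓ).1 = m) (h2 : (ipa A14 yv ℓ).2 = M0v) :
    ipa A14 yv (ℓ + 1) = (mu1v, M0v) := by
  rcases hm with rfl | rfl <;>
      (simp only [ipa, h1, h2]; rw [Prod.mk.injEq]; constructor)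
  · have s0 : sSup {r : ℝ | ∃ c : Fin 4, A14 c (0:Fin 6) ≠ 0 ∧ r = max 0 ((yv c - ∑ v' ∈ @Finset.filter (Fin 6) (fun v' => v' ≠ (0:Fin 6)) (fun a => @instDecidableNot _ (Classical.propDecidable (a = (0:Fin 6)))) Finset.univ, A14 c v' * M0v v') / A14 c (0:Fin 6))} = (0:ℝ) := by
      rw [pairSet _ 0 1 nb0, csSup_pair]
      simp (config := { decide := true }) [Finset.sum_filter, Fin.sum_univ_six]
      try norm_num [max_def, min_def]
    have s1 : sSup {r : ℝ | ∃ c : Fin 4, A14 c (1:Fin 6) ≠ 0 ∧ r = max 0 ((yv c - ∑ v' ∈ @Finset.filter (Fin 6) (fun v' => v' ≠ (1:Fin 6)) (fun a => @instDecidableNot _ (Classical.propDecidable (a = (1:Fin 6)))) Finset.univ, A14 c v' * M0v v') / A14 c (1:Fin 6))} = (0:ℝ) := by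
      rw [pairSet _ 0 2 nb1, csSup_pair]
      simp (config := { decide := true }) [Finset.sum_filter, Fin.sum_univ_six]
      try norm_num [max_def, min_def]
    have s2 : sSup {r : ℝ | ∃ c : Fin 4, A14 c (2:Fin 6) ≠ 0 ∧ r = max 0 ((yv c - ∑ v' ∈ @Finset.filter (Fin 6) (fun v' => v' ≠ (2:Fin 6)) (fun a => @instDecidableNot _ (Classical.propDecidable (a = (2:Fin 6)))) Finset.univ, A14 c v' * M0v v') / A14 c (2:Fin 6))} = (1:ℝ) := by
      rw [pairSet _ 2 3 nb2, csSup_pair]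
      simp (config := { decide := true }) [Finset.sum_filter, Fin.sum_univ_six]
      try norm_num [max_def, min_def]
    have s3 : sSup {r : ℝ | ∃ c : Fin 4, A14 c (3:Fin 6) ≠ 0 ∧ r = max 0 ((yv c - ∑ v' ∈ @Finset.filter (Fin 6) (fun v' => v' ≠ (3:Fin 6)) (fun a => @instDecidableNot _ (Classical.propDecidable (a = (3:Fin 6)))) Finset.univ, A14 c v' * M0v v') / A14 c (3:Fin 6))} = (0:ℝ) := by
      rw [pairSet _ 1 3 nb3, csSup_pair]
      simp (config := { decide := true }) [Finset.sum_filter, Fin.sum_univ_six]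
      try norm_num [max_def, min_def]
    have s4 : sSup {r : ℝ | ∃ c : Fin 4, A14 c (4:Fin 6) ≠ 0 ∧ r = max 0 ((yv c - ∑ v' ∈ @Finset.filter (Fin 6) (fun v' => v' ≠ (4:Fin 6)) (fun a => @instDecidableNot _ (Classical.propDecidable (a = (4:Fin 6)))) Finset.univ, A14 c v' * M0v v') / A14 c (4:Fin 6))} = (0:ℝ) := by
      rw [pairSet _ 1 3 nb4, csSup_pair]
      simp (config := { decide := true }) [Finset.sum_filter, Fin.sum_univ_six]
      try norm_num [max_def, min_def]
    have s5 : sSup {r : ℝ | ∃ c : Fin 4, A14 c (5:Fin 6) ≠ 0 ∧ r = max 0 ((yv c - ∑ v' ∈ @Finset.filter (Fin 6) (fun v' => v' ≠ (5:Fin 6)) (fun a => @instDecidableNot _ (Classical.propDecidable (a = (5:Fin 6)))) Finset.univ, A14 c v' * M0v v') / A14 c (5:Fin 6))} = (0:ℝ) := by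
      rw [pairSet _ 0 2 nb5, csSup_pair]
      simp (config := { decide := true }) [Finset.sum_filter, Fin.sum_univ_six]
      try norm_num [max_def, min_def]
    funext v
    fin_cases v
    · exact s0
    · exact s1
    · exact s2
    · exact s3
    · exact s4
    · exact s5
  · have t0 : sInf {r : ℝ | ∃ c : Fin 4, A14 c (0:Fin 6) ≠ 0 ∧ r = (yv c - ∑ v' ∈ @Finset.filter (Fin 6) (fun v' => v' ≠ (0:Fin 6)) (fun a => @instDecidableNot _ (Classical.propDecidable (a = (0:Fin 6)))) Finset.univ, A14 c v' * (fun _ => (0:ℝ)) v') / A14 c (0:Fin 6)} = (0:ℝ) := by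
      rw [pairSet _ 0 1 nb0, csInf_pair]
      simp (config := { decide := true }) [Finset.sum_filter, Fin.sum_univ_six]
      try norm_num [max_def, min_def]
    have t1 : sInf {r : ℝ | ∃ c : Fin 4, A14 c (1:Fin 6) ≠ 0 ∧ r = (yv c - ∑ v' ∈ @Finset.filter (Fin 6) (fun v' => v' ≠ (1:Fin 6)) (fun a => @instDecidableNot _ (Classical.propDecidable (a = (1:Fin 6)))) Finset.univ, A14 c v' * (fun _ => (0:ℝ)) v') / A14 c (1:Fin 6)} = (0:ℝ) := by
      rw [pairSet _ 0 2 nb1, csInf_pair]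
      simp (config := { decide := true }) [Finset.sum_filter, Fin.sum_univ_six]
      try norm_num [max_def, min_def]
    have t2 : sInf {r : ℝ | ∃ c : Fin 4, A14 c (2:Fin 6) ≠ 0 ∧ r = (yv c - ∑ v' ∈ @Finset.filter (Fin 6) (fun v' => v' ≠ (2:Fin 6)) (fun a => @instDecidableNot _ (Classical.propDecidable (a = (2:Fin 6)))) Finset.univ, A14 c v' * (fun _ => (0:ℝ)) v') / A14 c (2:Fin 6)} = (1:ℝ) := by
      rw [pairSet _ 2 3 nb2, csInf_pair]
      simp (config := { decide := true }) [Finset.sum_filter, Fin.sum_univ_six]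
      try norm_num [max_def, min_def]
    have t3 : sInf {r : ℝ | ∃ c : Fin 4, A14 c (3:Fin 6) ≠ 0 ∧ r = (yv c - ∑ v' ∈ @Finset.filter (Fin 6) (fun v' => v' ≠ (3:Fin 6)) (fun a => @instDecidableNot _ (Classical.propDecidable (a = (3:Fin 6)))) Finset.univ, A14 c v' * (fun _ => (0:ℝ)) v') / A14 c (3:Fin 6)} = (1:ℝ) := by
      rw [pairSet _ 1 3 nb3, csInf_pair]
      simp (config := { decide := true }) [Finset.sum_filter, Fin.sum_univ_six]
      try norm_num [max_def, min_def]
    have t4 : sInf {r : ℝ | ∃ c : Fin 4, A14 c (4:Fin 6) ≠ 0 ∧ r = (yv c - ∑ v' ∈ @Finset.filter (Fin 6) (fun v' => v' ≠ (4:Fin 6)) (fun a => @instDecidableNot _ (Classical.propDecidable (a = (4:Fin 6)))) Finset.univ, A14 c v' * (fun _ => (0:ℝ)) v') / A14 c (4:Fin 6)} = (1:ℝ) := by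
      rw [pairSet _ 1 3 nb4, csInf_pair]
      simp (config := { decide := true }) [Finset.sum_filter, Fin.sum_univ_six]
      try norm_num [max_def, min_def]
    have t5 : sInf {r : ℝ | ∃ c : Fin 4, A14 c (5:Fin 6) ≠ 0 ∧ r = (yv c - ∑ v' ∈ @Finset.filter (Fin 6) (fun v' => v' ≠ (5:Fin 6)) (fun a => @instDecidableNot _ (Classical.propDecidable (a = (5:Fin 6)))) Finset.univ, A14 c v' * (fun _ => (0:ℝ)) v') / A14 c (5:Fin 6)} = (0:ℝ) := by
      rw [pairSet _ 0 2 nb5, csInf_pair]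
      simp (config := { decide := true }) [Finset.sum_filter, Fin.sum_univ_six]
      try norm_num [max_def, min_def]
    funext v
    fin_cases v
    · exact t0
    · exact t1
    · exact t2
    · exact t3
    · exact t4
    · exact t5
  · have s0 : sSup {r : ℝ | ∃ c : Fin 4, A14 c (0:Fin 6) ≠ 0 ∧ r = max 0 ((yv c - ∑ v' ∈ @Finset.filter (Fin 6) (fun v' => v' ≠ (0:Fin 6)) (fun a => @instDecidableNot _ (Classical.propDecidable (a = (0:Fin 6)))) Finset.univ, A14 c v' * M0v v') / A14 c (0:Fin 6))} = (0:ℝ) := by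
      rw [pairSet _ 0 1 nb0, csSup_pair]
      simp (config := { decide := true }) [Finset.sum_filter, Fin.sum_univ_six]
      try norm_num [max_def, min_def]
    have s1 : sSup {r : ℝ | ∃ c : Fin 4, A14 c (1:Fin 6) ≠ 0 ∧ r = max 0 ((yv c - ∑ v' ∈ @Finset.filter (Fin 6) (fun v' => v' ≠ (1:Fin 6)) (fun a => @instDecidableNot _ (Classical.propDecidable (a = (1:Fin 6)))) Finset.univ, A14 c v' * M0v v') / A14 c (1:Fin 6))} = (0:ℝ) := by
      rw [pairSet _ 0 2 nb1, csSup_pair]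
      simp (config := { decide := true }) [Finset.sum_filter, Fin.sum_univ_six]
      try norm_num [max_def, min_def]
    have s2 : sSup {r : ℝ | ∃ c : Fin 4, A14 c (2:Fin 6) ≠ 0 ∧ r = max 0 ((yv c - ∑ v' ∈ @Finset.filter (Fin 6) (fun v' => v' ≠ (2:Fin 6)) (fun a => @instDecidableNot _ (Classical.propDecidable (a = (2:Fin 6)))) Finset.univ, A14 c v' * M0v v') / A14 c (2:Fin 6))} = (1:ℝ) := by
      rw [pairSet _ 2 3 nb2, csSup_pair]
      simp (config := { decide := true }) [Finset.sum_filter, Fin.sum_univ_six]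
      try norm_num [max_def, min_def]
    have s3 : sSup {r : ℝ | ∃ c : Fin 4, A14 c (3:Fin 6) ≠ 0 ∧ r = max 0 ((yv c - ∑ v' ∈ @Finset.filter (Fin 6) (fun v' => v' ≠ (3:Fin 6)) (fun a => @instDecidableNot _ (Classical.propDecidable (a = (3:Fin 6)))) Finset.univ, A14 c v' * M0v v') / A14 c (3:Fin 6))} = (0:ℝ) := by
      rw [pairSet _ 1 3 nb3, csSup_pair]
      simp (config := { decide := true }) [Finset.sum_filter, Fin.sum_univ_six]
      try norm_num [max_def, min_def]
    have s4 : sSup {r : ℝ | ∃ c : Fin 4, A14 c (4:Fin 6) ≠ 0 ∧ r = max 0 ((yv c - ∑ v' ∈ @Finset.filter (Fin 6) (fun v' => v' ≠ (4:Fin 6)) (fun a => @instDecidableNot _ (Classical.propDecidable (a = (4:Fin 6)))) Finset.univ, A14 c v' * M0v v') / A14 c (4:Fin 6))} = (0:ℝ) := by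
      rw [pairSet _ 1 3 nb4, csSup_pair]
      simp (config := { decide := true }) [Finset.sum_filter, Fin.sum_univ_six]
      try norm_num [max_def, min_def]
    have s5 : sSup {r : ℝ | ∃ c : Fin 4, A14 c (5:Fin 6) ≠ 0 ∧ r = max 0 ((yv c - ∑ v' ∈ @Finset.filter (Fin 6) (fun v' => v' ≠ (5:Fin 6)) (fun a => @instDecidableNot _ (Classical.propDecidable (a = (5:Fin 6)))) Finset.univ, A14 c v' * M0v v') / A14 c (5:Fin 6))} = (0:ℝ) := by
      rw [pairSet _ 0 2 nb5, csSup_pair]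
      simp (config := { decide := true }) [Finset.sum_filter, Fin.sum_univ_six]
      try norm_num [max_def, min_def]
    funext v
    fin_cases v
    · exact s0
    · exact s1
    · exact s2
    · exact s3
    · exact s4
    · exact s5
  · have t0 : sInf {r : ℝ | ∃ c : Fin 4, A14 c (0:Fin 6) ≠ 0 ∧ r = (yv c - ∑ v' ∈ @Finset.filter (Fin 6) (fun v' => v' ≠ (0:Fin 6)) (fun a => @instDecidableNot _ (Classical.propDecidable (a = (0:Fin 6)))) Finset.univ, A14 c v' * mu1v v') / A14 c (0:Fin 6)} = (0:ℝ) := by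
      rw [pairSet _ 0 1 nb0, csInf_pair]
      simp (config := { decide := true }) [Finset.sum_filter, Fin.sum_univ_six]
      try norm_num [max_def, min_def]
    have t1 : sInf {r : ℝ | ∃ c : Fin 4, A14 c (1:Fin 6) ≠ 0 ∧ r = (yv c - ∑ v' ∈ @Finset.filter (Fin 6) (fun v' => v' ≠ (1:Fin 6)) (fun a => @instDecidableNot _ (Classical.propDecidable (a = (1:Fin 6)))) Finset.univ, A14 c v' * mu1v v') / A14 c (1:Fin 6)} = (0:ℝ) := by
      rw [pairSet _ 0 2 nb1, csInf_pair]
      simp (config := { decide := true }) [Finset.sum_filter, Fin.sum_univ_six]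
      try norm_num [max_def, min_def]
    have t2 : sInf {r : ℝ | ∃ c : Fin 4, A14 c (2:Fin 6) ≠ 0 ∧ r = (yv c - ∑ v' ∈ @Finset.filter (Fin 6) (fun v' => v' ≠ (2:Fin 6)) (fun a => @instDecidableNot _ (Classical.propDecidable (a = (2:Fin 6)))) Finset.univ, A14 c v' * mu1v v') / A14 c (2:Fin 6)} = (1:ℝ) := by
      rw [pairSet _ 2 3 nb2, csInf_pair]
      simp (config := { decide := true }) [Finset.sum_filter, Fin.sum_univ_six]
      try norm_num [max_def, min_def]
    have t3 : sInf {r : ℝ | ∃ c : Fin 4, A14 c (3:Fin 6) ≠ 0 ∧ r = (yv c - ∑ v' ∈ @Finset.filter (Fin 6) (fun v' => v' ≠ (3:Fin 6)) (fun a => @instDecidableNot _ (Classical.propDecidable (a = (3:Fin 6)))) Finset.univ, A14 c v' * mu1v v') / A14 c (3:Fin 6)} = (1:ℝ) := by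
      rw [pairSet _ 1 3 nb3, csInf_pair]
      simp (config := { decide := true }) [Finset.sum_filter, Fin.sum_univ_six]
      try norm_num [max_def, min_def]
    have t4 : sInf {r : ℝ | ∃ c : Fin 4, A14 c (4:Fin 6) ≠ 0 ∧ r = (yv c - ∑ v' ∈ @Finset.filter (Fin 6) (fun v' => v' ≠ (4:Fin 6)) (fun a => @instDecidableNot _ (Classical.propDecidable (a = (4:Fin 6)))) Finset.univ, A14 c v' * mu1v v') / A14 c (4:Fin 6)} = (1:ℝ) := by
      rw [pairSet _ 1 3 nb4, csInf_pair]
      simp (config := { decide := true }) [Finset.sum_filter, Fin.sum_univ_six]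
      try norm_num [max_def, min_def]
    have t5 : sInf {r : ℝ | ∃ c : Fin 4, A14 c (5:Fin 6) ≠ 0 ∧ r = (yv c - ∑ v' ∈ @Finset.filter (Fin 6) (fun v' => v' ≠ (5:Fin 6)) (fun a => @instDecidableNot _ (Classical.propDecidable (a = (5:Fin 6)))) Finset.univ, A14 c v' * mu1v v') / A14 c (5:Fin 6)} = (0:ℝ) := by
      rw [pairSet _ 0 2 nb5, csInf_pair]
      simp (config := { decide := true }) [Finset.sum_filter, Fin.sum_univ_six]
      try norm_num [max_def, min_def]
    funext v
    fin_cases v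
    · exact t0
    · exact t1
    · exact t2
    · exact t3
    · exact t4
    · exact t5

lemma ipa_y : ∀ ℓ : ℕ, ipa A14 yv (ℓ + 1) = (mu1v, M0v) := by
  intro ℓ
  induction ℓ with
  | zero =>
      exact ipa_step_y _ 0 (Or.inl rfl)
        (congrArg Prod.fst ipa0_y) (congrArg Prod.snd ipa0_y)
  | succ n ih =>
      exact ipa_step_y _ (n+1) (Or.inr rfl)
        (congrArg Prod.fst ih) (congrArg Prod.snd ih)

lemma ipa0_T : ipa A14 yTv 0 = (fun _ => 0, MTv) := by
  simp only [ipa]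
  rw [Prod.mk.injEq]
  refine ⟨rfl, ?_⟩
  have e0 : sInf {r : ℝ | ∃ c : Fin 4, A14 c (0:Fin 6) ≠ 0 ∧ r = yTv c / A14 c (0:Fin 6)} = (0:ℝ) := by
    rw [pairSet _ 0 1 nb0, csInf_pair]
    norm_num [max_def, min_def]
  have e1 : sInf {r : ℝ | ∃ c : Fin 4, A14 c (1:Fin 6) ≠ 0 ∧ r = yTv c / A14 c (1:Fin 6)} = (0:ℝ) := by
    rw [pairSet _ 0 2 nb1, csInf_pair]
    norm_num [max_def, min_def]
  have e2 : sInf {r : ℝ | ∃ c : Fin 4, A14 c (2:Fin 6) ≠ 0 ∧ r = yTv c / A14 c (2:Fin 6)} = (0:ℝ) := by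
    rw [pairSet _ 2 3 nb2, csInf_pair]
    norm_num [max_def, min_def]
  have e3 : sInf {r : ℝ | ∃ c : Fin 4, A14 c (3:Fin 6) ≠ 0 ∧ r = yTv c / A14 c (3:Fin 6)} = (1:ℝ) := by
    rw [pairSet _ 1 3 nb3, csInf_pair]
    norm_num [max_def, min_def]
  have e4 : sInf {r : ℝ | ∃ c : Fin 4, A14 c (4:Fin 6) ≠ 0 ∧ r = yTv c / A14 c (4:Fin 6)} = (1:ℝ) := by
    rw [pairSet _ 1 3 nb4, csInf_pair]
    norm_num [max_def, min_def]
  have e5 : sInf {r : ℝ | ∃ c : Fin 4, A14 c (5:Fin 6) ≠ 0 ∧ r = yTv c / A14 c (5:Fin 6)} = (0:ℝ) := by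
    rw [pairSet _ 0 2 nb5, csInf_pair]
    norm_num [max_def, min_def]
  funext v
  fin_cases v
  · exact e0
  · exact e1
  · exact e2
  · exact e3
  · exact e4
  · exact e5

lemma ipa_step_T (ℓ : ℕ)
    (h1 : (ipa A14 yTv ℓ).1 = (fun _ => (0:ℝ))) (h2 : (ipa A14 yTv ℓ).2 = MTv) :
    ipa A14 yTv (ℓ + 1) = (fun _ => 0, MTv) := by
  simp only [ipa, h1, h2]
  rw [Prod.mk.injEq]
  constructor
  · have s0 : sSup {r : ℝ | ∃ c : Fin 4, A14 c (0:Fin 6) ≠ 0 ∧ r = max 0 ((yTv c - ∑ v' ∈ @Finset.filter (Fin 6) (fun v' => v' ≠ (0:Fin 6)) (fun a => @instDecidableNot _ (Classical.propDecidable (a = (0:Fin 6)))) Finset.univ, A14 c v' * MTv v') / A14 c (0:Fin 6))} = (0:ℝ) := by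
      rw [pairSet _ 0 1 nb0, csSup_pair]
      simp (config := { decide := true }) [Finset.sum_filter, Fin.sum_univ_six]
      try norm_num [max_def, min_def]
    have s1 : sSup {r : ℝ | ∃ c : Fin 4, A14 c (1:Fin 6) ≠ 0 ∧ r = max 0 ((yTv c - ∑ v' ∈ @Finset.filter (Fin 6) (fun v' => v' ≠ (1:Fin 6)) (fun a => @instDecidableNot _ (Classical.propDecidable (a = (1:Fin 6)))) Finset.univ, A14 c v' * MTv v') / A14 c (1:Fin 6))} = (0:ℝ) := by
      rw [pairSet _ 0 2 nb1, csSup_pair]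
      simp (config := { decide := true }) [Finset.sum_filter, Fin.sum_univ_six]
      try norm_num [max_def, min_def]
    have s2 : sSup {r : ℝ | ∃ c : Fin 4, A14 c (2:Fin 6) ≠ 0 ∧ r = max 0 ((yTv c - ∑ v' ∈ @Finset.filter (Fin 6) (fun v' => v' ≠ (2:Fin 6)) (fun a => @instDecidableNot _ (Classical.propDecidable (a = (2:Fin 6)))) Finset.univ, A14 c v' * MTv v') / A14 c (2:Fin 6))} = (0:ℝ) := by
      rw [pairSet _ 2 3 nb2, csSup_pair]
      simp (config := { decide := true }) [Finset.sum_filter, Fin.sum_univ_six]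
      try norm_num [max_def, min_def]
    have s3 : sSup {r : ℝ | ∃ c : Fin 4, A14 c (3:Fin 6) ≠ 0 ∧ r = max 0 ((yTv c - ∑ v' ∈ @Finset.filter (Fin 6) (fun v' => v' ≠ (3:Fin 6)) (fun a => @instDecidableNot _ (Classical.propDecidable (a = (3:Fin 6)))) Finset.univ, A14 c v' * MTv v') / A14 c (3:Fin 6))} = (0:ℝ) := by
      rw [pairSet _ 1 3 nb3, csSup_pair]
      simp (config := { decide := true }) [Finset.sum_filter, Fin.sum_univ_six]
      try norm_num [max_def, min_def]
    have s4 : sSup {r : ℝ | ∃ c : Fin 4, A14 c (4:Fin 6) ≠ 0 ∧ r = max 0 ((yTv c - ∑ v' ∈ @Finset.filter (Fin 6) (fun v' => v' ≠ (4:Fin 6)) (fun a => @instDecidableNot _ (Classical.propDecidable (a = (4:Fin 6)))) Finset.univ, A14 c v' * MTv v') / A14 c (4:Fin 6))} = (0:ℝ) := by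
      rw [pairSet _ 1 3 nb4, csSup_pair]
      simp (config := { decide := true }) [Finset.sum_filter, Fin.sum_univ_six]
      try norm_num [max_def, min_def]
    have s5 : sSup {r : ℝ | ∃ c : Fin 4, A14 c (5:Fin 6) ≠ 0 ∧ r = max 0 ((yTv c - ∑ v' ∈ @Finset.filter (Fin 6) (fun v' => v' ≠ (5:Fin 6)) (fun a => @instDecidableNot _ (Classical.propDecidable (a = (5:Fin 6)))) Finset.univ, A14 c v' * MTv v') / A14 c (5:Fin 6))} = (0:ℝ) := by
      rw [pairSet _ 0 2 nb5, csSup_pair]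
      simp (config := { decide := true }) [Finset.sum_filter, Fin.sum_univ_six]
      try norm_num [max_def, min_def]
    funext v
    fin_cases v
    · exact s0
    · exact s1
    · exact s2
    · exact s3
    · exact s4
    · exact s5
  · have t0 : sInf {r : ℝ | ∃ c : Fin 4, A14 c (0:Fin 6) ≠ 0 ∧ r = (yTv c - ∑ v' ∈ @Finset.filter (Fin 6) (fun v' => v' ≠ (0:Fin 6)) (fun a => @instDecidableNot _ (Classical.propDecidable (a = (0:Fin 6)))) Finset.univ, A14 c v' * (fun _ => (0:ℝ)) v') / A14 c (0:Fin 6)} = (0:ℝ) := by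
      rw [pairSet _ 0 1 nb0, csInf_pair]
      simp (config := { decide := true }) [Finset.sum_filter, Fin.sum_univ_six]
      try norm_num [max_def, min_def]
    have t1 : sInf {r : ℝ | ∃ c : Fin 4, A14 c (1:Fin 6) ≠ 0 ∧ r = (yTv c - ∑ v' ∈ @Finset.filter (Fin 6) (fun v' => v' ≠ (1:Fin 6)) (fun a => @instDecidableNot _ (Classical.propDecidable (a = (1:Fin 6)))) Finset.univ, A14 c v' * (fun _ => (0:ℝ)) v') / A14 c (1:Fin 6)} = (0:ℝ) := by
      rw [pairSet _ 0 2 nb1, csInf_pair]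
      simp (config := { decide := true }) [Finset.sum_filter, Fin.sum_univ_six]
      try norm_num [max_def, min_def]
    have t2 : sInf {r : ℝ | ∃ c : Fin 4, A14 c (2:Fin 6) ≠ 0 ∧ r = (yTv c - ∑ v' ∈ @Finset.filter (Fin 6) (fun v' => v' ≠ (2:Fin 6)) (fun a => @instDecidableNot _ (Classical.propDecidable (a = (2:Fin 6)))) Finset.univ, A14 c v' * (fun _ => (0:ℝ)) v') / A14 c (2:Fin 6)} = (0:ℝ) := by
      rw [pairSet _ 2 3 nb2, csInf_pair]
      simp (config := { decide := true }) [Finset.sum_filter, Fin.sum_univ_six]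
      try norm_num [max_def, min_def]
    have t3 : sInf {r : ℝ | ∃ c : Fin 4, A14 c (3:Fin 6) ≠ 0 ∧ r = (yTv c - ∑ v' ∈ @Finset.filter (Fin 6) (fun v' => v' ≠ (3:Fin 6)) (fun a => @instDecidableNot _ (Classical.propDecidable (a = (3:Fin 6)))) Finset.univ, A14 c v' * (fun _ => (0:ℝ)) v') / A14 c (3:Fin 6)} = (1:ℝ) := by
      rw [pairSet _ 1 3 nb3, csInf_pair]
      simp (config := { decide := true }) [Finset.sum_filter, Fin.sum_univ_six]
      try norm_num [max_def, min_def]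
    have t4 : sInf {r : ℝ | ∃ c : Fin 4, A14 c (4:Fin 6) ≠ 0 ∧ r = (yTv c - ∑ v' ∈ @Finset.filter (Fin 6) (fun v' => v' ≠ (4:Fin 6)) (fun a => @instDecidableNot _ (Classical.propDecidable (a = (4:Fin 6)))) Finset.univ, A14 c v' * (fun _ => (0:ℝ)) v') / A14 c (4:Fin 6)} = (1:ℝ) := by
      rw [pairSet _ 1 3 nb4, csInf_pair]
      simp (config := { decide := true }) [Finset.sum_filter, Fin.sum_univ_six]
      try norm_num [max_def, min_def]
    have t5 : sInf {r : ℝ | ∃ c : Fin 4, A14 c (5:Fin 6) ≠ 0 ∧ r = (yTv c - ∑ v' ∈ @Finset.filter (Fin 6) (fun v' => v' ≠ (5:Fin 6)) (fun a => @instDecidableNot _ (Classical.propDecidable (a = (5:Fin 6)))) Finset.univ, A14 c v' * (fun _ => (0:ℝ)) v') / A14 c (5:Fin 6)} = (0:ℝ) := by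
      rw [pairSet _ 0 2 nb5, csInf_pair]
      simp (config := { decide := true }) [Finset.sum_filter, Fin.sum_univ_six]
      try norm_num [max_def, min_def]
    funext v
    fin_cases v
    · exact t0
    · exact t1
    · exact t2
    · exact t3
    · exact t4
    · exact t5

lemma ipa_T : ∀ ℓ : ℕ, ipa A14 yTv ℓ = (fun _ => 0, MTv) := by
  intro ℓ
  induction ℓ with
  | zero => exact ipa0_T
  | succ n ih => exact ipa_step_T n (congrArg Prod.fst ih) (congrArg Prod.snd ih)

lemma force_mem (U : Finset (Fin 6)) (hU : U ⊆ {0, 1, 2, 3}) (hS : StoppingSet A14 U)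
    (v w : Fin 6) (c : Fin 4) (hv : v ∈ U) (hA : A14 c v ≠ 0)
    (hpair : ∀ u ∈ ({0, 1, 2, 3} : Finset (Fin 6)), A14 c u ≠ 0 → u = v ∨ u = w) :
    w ∈ U := by
  have hc : c ∈ NT A14 U := by
    simp only [NT, Finset.mem_filter, Finset.mem_univ, true_and]
    exact ⟨v, hv, hA⟩
  have h2 := hS c hc
  by_contra hw
  have hsub : NTc A14 U c ⊆ {v} := by
    intro u hu
    rw [NTc, Finset.mem_filter] at hu
    rcases hpair u (hU hu.1) hu.2 with rfl | rfl
    · exact Finset.mem_singleton_self u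
    · exact absurd hu.1 hw
  have hcard := (Finset.card_le_card hsub).trans (le_of_eq (Finset.card_singleton v))
  omega

/-- counter-example to [RDVD12, Thm. 2]: `{v₄}` is a termatiko set;
the IPA on `y = Ax = (0,1,1,2)` never recovers `v₄` but recovers `v₃` from
iteration 1 onwards, hence fails to fully recover `x`, although
`{v₁,v₂,v₃,v₄}` is a minimal stopping set containing at most `|·|-2` nonzero
positions of `x` and the zero-valued measurement node `c₁` is connected to it. -/
theorem counterexample_RDVD12_thm2 :
    y14 = ![0, 1, 1, 2] ∧
    IsTermatiko A14 ({3} : Finset (Fin 6)) ∧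
    (∀ ℓ : ℕ, ipaMu A14 y14 ℓ 3 = 0) ∧
    (∀ ℓ : ℕ, ipaMu A14 y14 (ℓ + 1) 2 = 1) ∧ x14 2 = 1 ∧
    (∀ ℓ : ℕ, ∃ v : Fin 6, ipaMu A14 y14 ℓ v ≠ x14 v) ∧
    StoppingSet A14 ({0, 1, 2, 3} : Finset (Fin 6)) ∧
    (∀ U : Finset (Fin 6), U ⊆ {0, 1, 2, 3} → U.Nonempty → StoppingSet A14 U →
      U = {0, 1, 2, 3}) ∧
    (({0, 1, 2, 3} : Finset (Fin 6)).filter fun v => x14 v ≠ 0).card ≤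
      ({0, 1, 2, 3} : Finset (Fin 6)).card - 2 ∧
    y14 0 = 0 ∧ (∃ v ∈ ({0, 1, 2, 3} : Finset (Fin 6)), A14 0 v ≠ 0) := by
  have p3 : ∀ ℓ : ℕ, ipaMu A14 y14 ℓ 3 = 0 := by
    intro ℓ
    show (ipa A14 y14 ℓ).1 3 = 0
    rw [hy14]
    cases ℓ with
    | zero => rfl
    | succ n => rw [ipa_y n]; rfl
  have p4 : ∀ ℓ : ℕ, ipaMu A14 y14 (ℓ + 1) 2 = 1 := by
    intro ℓ
    show (ipa A14 y14 (ℓ + 1)).1 2 = 1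
    rw [hy14, ipa_y ℓ]; rfl
  have p2 : IsTermatiko A14 ({3} : Finset (Fin 6)) := by
    intro ℓ v
    show (ipa A14 (measT A14 ({3} : Finset (Fin 6))) ℓ).1 v = 0
    rw [hyT, ipa_T ℓ]
  have p6 : ∀ ℓ : ℕ, ∃ v : Fin 6, ipaMu A14 y14 ℓ v ≠ x14 v := by
    intro ℓ
    refine ⟨3, ?_⟩
    rw [p3 ℓ]
    norm_num
  have hc0 : NTc A14 ({0, 1, 2, 3} : Finset (Fin 6)) (0 : Fin 4) = {0, 1} := by
    ext v
    simp only [NTc, Finset.mem_filter]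
    fin_cases v <;> simp (config := { decide := true })
  have hc1 : NTc A14 ({0, 1, 2, 3} : Finset (Fin 6)) (1 : Fin 4) = {0, 3} := by
    ext v
    simp only [NTc, Finset.mem_filter]
    fin_cases v <;> simp (config := { decide := true })
  have hc2 : NTc A14 ({0, 1, 2, 3} : Finset (Fin 6)) (2 : Fin 4) = {1, 2} := by
    ext v
    simp only [NTc, Finset.mem_filter]
    fin_cases v <;> simp (config := { decide := true })
  have hc3 : NTc A14 ({0, 1, 2, 3} : Finset (Fin 6)) (3 : Fin 4) = {2, 3} := by
    ext v
    simp only [NTc, Finset.mem_filter]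
    fin_cases v <;> simp (config := { decide := true })
  have p7 : StoppingSet A14 ({0, 1, 2, 3} : Finset (Fin 6)) := by
    have k0 : 2 ≤ (NTc A14 ({0, 1, 2, 3} : Finset (Fin 6)) (0 : Fin 4)).card := by
      rw [hc0]; decide
    have k1 : 2 ≤ (NTc A14 ({0, 1, 2, 3} : Finset (Fin 6)) (1 : Fin 4)).card := by
      rw [hc1]; decide
    have k2 : 2 ≤ (NTc A14 ({0, 1, 2, 3} : Finset (Fin 6)) (2 : Fin 4)).card := by
      rw [hc2]; decide
    have k3 : 2 ≤ (NTc A14 ({0, 1, 2, 3} : Finset (Fin 6)) (3 : Fin 4)).card := by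
      rw [hc3]; decide
    intro c _
    fin_cases c
    · exact k0
    · exact k1
    · exact k2
    · exact k3
  have p8 : ∀ U : Finset (Fin 6), U ⊆ {0, 1, 2, 3} → U.Nonempty → StoppingSet A14 U →
      U = {0, 1, 2, 3} := by
    intro U hU hne hS
    obtain ⟨v, hv⟩ := hne
    have imp01 : (0:Fin 6) ∈ U → (1:Fin 6) ∈ U := fun h =>
      force_mem U hU hS 0 1 0 h (by simp)
        (by intro u hu; fin_cases hu <;> simp (config := { decide := true }))
    have imp10 : (1:Fin 6) ∈ U → (0:Fin 6) ∈ U := fun h =>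
      force_mem U hU hS 1 0 0 h (by simp)
        (by intro u hu; fin_cases hu <;> simp (config := { decide := true }))
    have imp03 : (0:Fin 6) ∈ U → (3:Fin 6) ∈ U := fun h =>
      force_mem U hU hS 0 3 1 h (by simp)
        (by intro u hu; fin_cases hu <;> simp (config := { decide := true }))
    have imp30 : (3:Fin 6) ∈ U → (0:Fin 6) ∈ U := fun h =>
      force_mem U hU hS 3 0 1 h (by simp)
        (by intro u hu; fin_cases hu <;> simp (config := { decide := true }))
    have imp12 : (1:Fin 6) ∈ U → (2:Fin 6) ∈ U := fun h =>
      force_mem U hU hS 1 2 2 h (by simp)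
        (by intro u hu; fin_cases hu <;> simp (config := { decide := true }))
    have imp21 : (2:Fin 6) ∈ U → (1:Fin 6) ∈ U := fun h =>
      force_mem U hU hS 2 1 2 h (by simp)
        (by intro u hu; fin_cases hu <;> simp (config := { decide := true }))
    have imp23 : (2:Fin 6) ∈ U → (3:Fin 6) ∈ U := fun h =>
      force_mem U hU hS 2 3 3 h (by simp)
        (by intro u hu; fin_cases hu <;> simp (config := { decide := true }))
    have imp32 : (3:Fin 6) ∈ U → (2:Fin 6) ∈ U := fun h =>
      force_mem U hU hS 3 2 3 h (by simp)
        (by intro u hu; fin_cases hu <;> simp (config := { decide := true }))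
    have hall : (0:Fin 6) ∈ U ∧ (1:Fin 6) ∈ U ∧ (2:Fin 6) ∈ U ∧ (3:Fin 6) ∈ U := by
      have hv4 := hU hv
      fin_cases hv4
      · exact ⟨hv, imp01 hv, imp12 (imp01 hv), imp03 hv⟩
      · exact ⟨imp10 hv, hv, imp12 hv, imp23 (imp12 hv)⟩
      · exact ⟨imp10 (imp21 hv), imp21 hv, hv, imp23 hv⟩
      · exact ⟨imp30 hv, imp21 (imp32 hv), imp32 hv, hv⟩
    refine Finset.Subset.antisymm hU ?_
    intro u hu
    fin_cases hu
    · exact hall.1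
    · exact hall.2.1
    · exact hall.2.2.1
    · exact hall.2.2.2
  have p9 : (({0, 1, 2, 3} : Finset (Fin 6)).filter fun v => x14 v ≠ 0).card ≤
      ({0, 1, 2, 3} : Finset (Fin 6)).card - 2 := by
    refine le_trans (Finset.card_le_card (?_ : _ ⊆ ({2, 3} : Finset (Fin 6)))) (by decide)
    intro u hu
    rw [Finset.mem_filter] at hu
    obtain ⟨hu1, hu2⟩ := hu
    fin_cases hu1 <;> simp_all (config := { decide := true })
  refine ⟨hy14, p2, p3, p4, rfl, p6, p7, p8, p9, ?_, ⟨0, by decide, by simp⟩⟩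
  rw [hy14]; rfl
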